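/- Let u be a continuous solution of the integral equation u(t) = α₁ + χ₁ t + (α₂ − α₁ − χ₁T)(t/T)^p + (1/Γ(p))[∫₀^t (t-s)^{p-1} f(s,u(s)) ds − (t/T)^p ∫₀^T (T-s)^{p-1} f(s,u(s)) ds] on [0,T]. Define Δ(χ₁) := (α₂ − α₁ − χ₁T)Γ(p+1)/T^p − (p/T^p)∫₀^T (T-s)^{p-1} f(s,u(s)) ds. Then u also solves the perturbed Volterra integral equation u(t) = α₁ + χ₁ t + (1/Γ(p))∫₀^t (t-s)^{p-1}[f(s,u(s)) + Δ(χ₁)] ds, i.e., it solves the Caputo initial value problem C_0D^p_t u = f(t,u) + Δ(χ₁), u(0) = α₁, u'(0) = χ₁. -/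

import Mathlib

open Real intervalIntegral

theorem stmt8 (n : ℕ) (p T : ℝ) (hp1 : 1 < p) (hp2 : p ≤ 2) (hT : 0 < T)
    (α₁ α₂ χ₁ : Fin n → ℝ)
    (f : ℝ → (Fin n → ℝ) → (Fin n → ℝ))
    (hf : Continuous (fun q : ℝ × (Fin n → ℝ) => f q.1 q.2))
    (u : ℝ → (Fin n → ℝ)) (hu : ContinuousOn u (Set.Icc 0 T))
    (heq : ∀ t ∈ Set.Icc 0 T, u t = fun i =>
      α₁ i + χ₁ i * t + (α₂ i - α₁ i - χ₁ i * T) * (t / T) ^ p +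
        (1 / Real.Gamma p) *
          ((∫ s in (0 : ℝ)..t, (t - s) ^ (p - 1) * f s (u s) i) -
            (t / T) ^ p * ∫ s in (0 : ℝ)..T, (T - s) ^ (p - 1) * f s (u s) i))
    (Δ : Fin n → ℝ)
    (hΔ : Δ = fun i =>
      (α₂ i - α₁ i - χ₁ i * T) * Real.Gamma (p + 1) / T ^ p -
        (p / T ^ p) * ∫ s in (0 : ℝ)..T, (T - s) ^ (p - 1) * f s (u s) i) :
    ∀ t ∈ Set.Icc 0 T, u t = fun i =>
      α₁ i + χ₁ i * t +
        (1 / Real.Gamma p) *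
          ∫ s in (0 : ℝ)..t, (t - s) ^ (p - 1) * (f s (u s) i + Δ i) := by
  intro t ht
  obtain ⟨ht0, htT⟩ := ht
  have hp0 : (0:ℝ) < p := lt_trans one_pos hp1
  have hΓ : Real.Gamma p ≠ 0 := (Real.Gamma_pos_of_pos hp0).ne'
  have hΓ1 : Real.Gamma (p + 1) = p * Real.Gamma p := Real.Gamma_add_one hp0.ne'
  -- continuity of s ↦ f s (u s) i on [0, T]
  have hcont : ∀ i, ContinuousOn (fun s => f s (u s) i) (Set.Icc 0 T) := by
    intro i
    have h1 : ContinuousOn (fun s => f s (u s)) (Set.Icc 0 T) :=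
      hf.comp_continuousOn (continuousOn_id.prodMk hu)
    exact (continuous_apply i).comp_continuousOn h1
  have hrpow : Continuous (fun s : ℝ => (t - s) ^ (p - 1)) := by
    apply Continuous.rpow_const (continuous_const.sub continuous_id)
    intro x; right; linarith
  have hsub : Set.uIcc (0:ℝ) t ⊆ Set.Icc 0 T := by
    rw [Set.uIcc_of_le ht0]
    exact Set.Icc_subset_Icc le_rfl htT
  funext i
  have hI1 : IntervalIntegrable (fun s => (t - s) ^ (p - 1) * f s (u s) i)
      MeasureTheory.volume 0 t := by
    apply ContinuousOn.intervalIntegrable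
    exact (hrpow.continuousOn).mul ((hcont i).mono hsub)
  have hI2 : IntervalIntegrable (fun s => (t - s) ^ (p - 1) * Δ i)
      MeasureTheory.volume 0 t :=
    (hrpow.mul continuous_const).intervalIntegrable 0 t
  have hsplit : (∫ s in (0:ℝ)..t, (t - s) ^ (p - 1) * (f s (u s) i + Δ i))
      = (∫ s in (0:ℝ)..t, (t - s) ^ (p - 1) * f s (u s) i)
        + (∫ s in (0:ℝ)..t, (t - s) ^ (p - 1) * Δ i) := by
    rw [← intervalIntegral.integral_add hI1 hI2]
    congr 1; funext s; ring
  have hpow : (∫ s in (0:ℝ)..t, (t - s) ^ (p - 1)) = t ^ p / p := by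
    have := intervalIntegral.integral_comp_sub_left (fun s : ℝ => s ^ (p - 1)) t
      (a := (0:ℝ)) (b := t)
    simp only [sub_zero, sub_self] at this
    rw [this, integral_rpow (Or.inl (by linarith))]
    rw [Real.zero_rpow (by linarith : p - 1 + 1 ≠ 0)]
    ring_nf
  have hconst : (∫ s in (0:ℝ)..t, (t - s) ^ (p - 1) * Δ i) = Δ i * (t ^ p / p) := by
    rw [intervalIntegral.integral_mul_const, hpow]; ring
  have hdiv : (t / T) ^ p = t ^ p / T ^ p := Real.div_rpow ht0 hT.le p
  have hT0 : T ^ p ≠ 0 := (Real.rpow_pos_of_pos hT p).ne'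
  have h := congrFun (heq t ⟨ht0, htT⟩) i
  rw [h]
  rw [hsplit, hconst]
  simp only [hΔ, hΓ1, hdiv]
  field_simp
  ring
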